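/- arXiv:1807.03949 — 4 statements merged into one kernel-verified Lean document; each statement's English description precedes it below -/
import Mathlib

section
/- For n ≥ 1, let g_n(t) = ∑_{k=1}^n (1 − k/n)(1/k) sin(kt) and e_n(t) = e^{int}. Then the n-th symmetric partial Fourier sum of the product e_n·g_n evaluated at 0 equals ∑_{k=1}^n (1 − k/n)·(−1)/(2ik), and hence |S_n(e_n g_n)(0)| = ∑_{k=1}^n (1 − k/n)/(2k). -/
open Real Complex MeasureTheory Filter

/-- The `k`-th Fourier coefficient of a `2π`-periodic function `f : ℝ → ℂ`. -/
noncomputable def fc (f : ℝ → ℂ) (k : ℤ) : ℂ :=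
  (1 / (2 * Real.pi)) * ∫ θ in (-Real.pi)..Real.pi, f θ * Complex.exp (-Complex.I * k * θ)

/-- The `N`-th symmetric partial sum of the Fourier series of `f`. -/
noncomputable def pS (f : ℝ → ℂ) (N : ℕ) (t : ℝ) : ℂ :=
  ∑ k ∈ Finset.Icc (-(N : ℤ)) (N : ℤ), fc f k * Complex.exp (Complex.I * k * t)

/-- `g_n(t) = ∑_{k=1}^n (1 - k/n)(1/k) sin(kt)` viewed as a complex-valued function. -/
noncomputable def gFun (n : ℕ) (t : ℝ) : ℂ :=
  ∑ k ∈ Finset.Icc 1 n, (1 - (k : ℂ) / n) * (1 / k) * Real.sin (k * t)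

/-- `e_n(t) = e^{int}`. -/
noncomputable def eFun (n : ℕ) (t : ℝ) : ℂ := Complex.exp (Complex.I * n * t)

lemma intA (j : ℤ) : (∫ θ in (-Real.pi)..Real.pi, Complex.exp (Complex.I * j * θ)) =
    if j = 0 then (2 * Real.pi : ℂ) else 0 := by
  rcases eq_or_ne j 0 with h | h
  · subst h
    simp only [Int.cast_zero, mul_zero, zero_mul, Complex.exp_zero, if_pos rfl]
    rw [intervalIntegral.integral_const, sub_neg_eq_add, Complex.real_smul]
    push_cast
    ring
  · rw [if_neg h]
    have hc : (Complex.I * (j : ℂ)) ≠ 0 := by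
      simp [Complex.I_ne_zero, h]
    have := integral_exp_mul_complex (a := -Real.pi) (b := Real.pi) hc
    simp only [mul_assoc] at this ⊢
    rw [this]
    have h1 : Complex.exp (Complex.I * ((j:ℂ) * (Real.pi:ℂ))) = (-1 : ℂ) ^ j := by
      rw [show Complex.I * ((j:ℂ) * (Real.pi:ℂ)) = (j:ℂ) * ((Real.pi:ℂ) * Complex.I) by ring,
        Complex.exp_int_mul, Complex.exp_pi_mul_I]
    have h2 : Complex.exp (Complex.I * ((j:ℂ) * ((-Real.pi : ℝ):ℂ))) = (-1 : ℂ) ^ j := by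
      rw [show Complex.I * ((j:ℂ) * ((-Real.pi:ℝ):ℂ)) = ((-j : ℤ):ℂ) * ((Real.pi:ℂ) * Complex.I) by
          push_cast; ring,
        Complex.exp_int_mul, Complex.exp_pi_mul_I, zpow_neg, ← inv_zpow, inv_neg, inv_one]
    rw [h1, h2, sub_self, zero_div]

lemma fcE (j m : ℤ) : fc (fun t => Complex.exp (Complex.I * j * t)) m
    = if m = j then 1 else 0 := by
  unfold fc
  have key : ∀ θ : ℝ, Complex.exp (Complex.I * j * θ) * Complex.exp (-Complex.I * m * θ)
      = Complex.exp (Complex.I * ((j - m : ℤ)) * θ) := by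
    intro θ
    rw [← Complex.exp_add]
    push_cast
    ring_nf
  simp only [key]
  rw [intA]
  rcases eq_or_ne m j with h | h
  · have hpi : (Real.pi : ℂ) ≠ 0 := by exact_mod_cast Real.pi_ne_zero
    simp [h]
    field_simp
  · rw [if_neg (sub_ne_zero.mpr (Ne.symm h)), if_neg h, mul_zero]

lemma sin_exp (z : ℂ) :
    Complex.sin z = (Complex.exp (-z * Complex.I) - Complex.exp (z * Complex.I)) * Complex.I / 2 :=
  rfl

lemma prodEq (n : ℕ) (t : ℝ) :
    eFun n t * gFun n t = ∑ k ∈ Finset.Icc 1 n,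
      ((1 - (k:ℂ)/n) * (1/k) / (2*Complex.I)) *
        (Complex.exp (Complex.I * (((n:ℤ)+k : ℤ):ℂ) * t)
          - Complex.exp (Complex.I * (((n:ℤ)-k : ℤ):ℂ) * t)) := by
  unfold eFun gFun
  rw [Finset.mul_sum]
  refine Finset.sum_congr rfl fun k hk => ?_
  have e1 : Complex.exp (Complex.I * (((n:ℤ)+k : ℤ):ℂ) * t)
      = Complex.exp (Complex.I * n * t) * Complex.exp ((((k:ℝ)*t : ℝ):ℂ) * Complex.I) := by
    rw [← Complex.exp_add]; congr 1; push_cast; ring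
  have e2 : Complex.exp (Complex.I * (((n:ℤ)-k : ℤ):ℂ) * t)
      = Complex.exp (Complex.I * n * t) * Complex.exp (-(((k:ℝ)*t : ℝ):ℂ) * Complex.I) := by
    rw [← Complex.exp_add]; congr 1; push_cast; ring
  rw [e1, e2, Complex.ofReal_sin, sin_exp]
  field_simp
  ring_nf
  simp [Complex.I_sq]
  ring_nf

lemma fcProd (n : ℕ) (m : ℤ) :
    fc (fun t => eFun n t * gFun n t) m = ∑ k ∈ Finset.Icc 1 n,
      ((1 - (k:ℂ)/n) * (1/k) / (2*Complex.I)) *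
        ((if m = (n:ℤ)+k then 1 else 0) - (if m = (n:ℤ)-k then 1 else 0)) := by
  unfold fc
  have key : ∀ θ ∈ Set.uIcc (-Real.pi) Real.pi,
      (fun t => eFun n t * gFun n t) θ * Complex.exp (-Complex.I * m * θ)
      = ∑ k ∈ Finset.Icc 1 n,
        (((1 - (k:ℂ)/n) * (1/k) / (2*Complex.I))
            * Complex.exp (Complex.I * (((n:ℤ)+k-m : ℤ):ℂ) * θ)
         - ((1 - (k:ℂ)/n) * (1/k) / (2*Complex.I))
            * Complex.exp (Complex.I * (((n:ℤ)-k-m : ℤ):ℂ) * θ)) := by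
    intro θ _
    simp only
    rw [prodEq, Finset.sum_mul]
    refine Finset.sum_congr rfl fun k hk => ?_
    have e1 : Complex.exp (Complex.I * (((n:ℤ)+k : ℤ):ℂ) * θ) * Complex.exp (-Complex.I * m * θ)
        = Complex.exp (Complex.I * (((n:ℤ)+k-m : ℤ):ℂ) * θ) := by
      rw [← Complex.exp_add]; congr 1; push_cast; ring
    have e2 : Complex.exp (Complex.I * (((n:ℤ)-k : ℤ):ℂ) * θ) * Complex.exp (-Complex.I * m * θ)
        = Complex.exp (Complex.I * (((n:ℤ)-k-m : ℤ):ℂ) * θ) := by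
      rw [← Complex.exp_add]; congr 1; push_cast; ring
    rw [show ∀ c A B E : ℂ, (c*(A-B))*E = c*(A*E) - c*(B*E) from fun _ _ _ _ => by ring,
      e1, e2]
  rw [intervalIntegral.integral_congr key, intervalIntegral.integral_finset_sum, Finset.mul_sum]
  · refine Finset.sum_congr rfl fun k hk => ?_
    have hA : IntervalIntegrable
        (fun θ : ℝ => ((1 - (k:ℂ)/n) * (1/k) / (2*Complex.I))
          * Complex.exp (Complex.I * (((n:ℤ)+k-m : ℤ):ℂ) * θ)) volume (-Real.pi) Real.pi := by
      apply Continuous.intervalIntegrable; fun_prop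
    have hB : IntervalIntegrable
        (fun θ : ℝ => ((1 - (k:ℂ)/n) * (1/k) / (2*Complex.I))
          * Complex.exp (Complex.I * (((n:ℤ)-k-m : ℤ):ℂ) * θ)) volume (-Real.pi) Real.pi := by
      apply Continuous.intervalIntegrable; fun_prop
    rw [intervalIntegral.integral_sub hA hB, intervalIntegral.integral_const_mul,
      intervalIntegral.integral_const_mul, intA, intA]
    have hpi : (Real.pi : ℂ) ≠ 0 := by exact_mod_cast Real.pi_ne_zero
    simp only [sub_eq_zero,
      show ((n:ℤ)+k = m) = (m = (n:ℤ)+k) from propext eq_comm,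
      show ((n:ℤ)-k = m) = (m = (n:ℤ)-k) from propext eq_comm]
    have hite : ∀ (c : Prop) [Decidable c],
        (if c then (2*(Real.pi:ℂ)) else 0) = (2*(Real.pi:ℂ)) * (if c then (1:ℂ) else 0) := by
      intro c _; split_ifs <;> simp
    rw [hite, hite]
    generalize (if m = (n:ℤ)+(k:ℤ) then (1:ℂ) else 0) = A
    generalize (if m = (n:ℤ)-(k:ℤ) then (1:ℂ) else 0) = B
    field_simp [hpi]
  · intro k _
    apply Continuous.intervalIntegrable
    fun_prop

theorem partial_sum_at_zero (n : ℕ) (hn : 1 ≤ n) :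
    pS (fun t => eFun n t * gFun n t) n 0 =
      ∑ k ∈ Finset.Icc 1 n, (1 - (k : ℂ) / n) * (-1) / (2 * Complex.I * k) ∧
    ‖pS (fun t => eFun n t * gFun n t) n 0‖ =
      ∑ k ∈ Finset.Icc 1 n, (1 - (k : ℝ) / n) / (2 * k) := by
  have hn0 : (n:ℂ) ≠ 0 := Nat.cast_ne_zero.mpr (by omega)
  have h1 : pS (fun t => eFun n t * gFun n t) n 0 =
      ∑ k ∈ Finset.Icc 1 n, (1 - (k : ℂ) / n) * (-1) / (2 * Complex.I * k) := by
    unfold pS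
    simp only [fcProd, Complex.ofReal_zero, mul_zero, Complex.exp_zero, mul_one]
    rw [Finset.sum_comm]
    refine Finset.sum_congr rfl fun k hk => ?_
    obtain ⟨hk1, hk2⟩ := Finset.mem_Icc.mp hk
    have hk0 : (k:ℂ) ≠ 0 := Nat.cast_ne_zero.mpr (by omega)
    rw [← Finset.mul_sum, Finset.sum_sub_distrib, Finset.sum_ite_eq', Finset.sum_ite_eq']
    have m1 : ((n:ℤ)+k) ∉ Finset.Icc (-(n:ℤ)) (n:ℤ) := by
      simp only [Finset.mem_Icc]; omega
    have m2 : ((n:ℤ)-k) ∈ Finset.Icc (-(n:ℤ)) (n:ℤ) := by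
      simp only [Finset.mem_Icc]; omega
    rw [if_neg m1, if_pos m2]
    ring
  refine ⟨h1, ?_⟩
  rw [h1]
  have h2 : ∑ k ∈ Finset.Icc 1 n, (1 - (k : ℂ) / n) * (-1) / (2 * Complex.I * k)
      = Complex.I * ((∑ k ∈ Finset.Icc 1 n, (1 - (k : ℝ) / n) / (2 * k) : ℝ) : ℂ) := by
    rw [Complex.ofReal_sum, Finset.mul_sum]
    refine Finset.sum_congr rfl fun k hk => ?_
    obtain ⟨hk1, hk2⟩ := Finset.mem_Icc.mp hk
    have hk0 : (k:ℂ) ≠ 0 := Nat.cast_ne_zero.mpr (by omega)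
    have hI := Complex.I_ne_zero
    push_cast
    field_simp
    ring_nf
    simp [Complex.I_sq]
  rw [h2, norm_mul, Complex.norm_I, one_mul, Complex.norm_real, Real.norm_eq_abs, _root_.abs_of_nonneg]
  apply Finset.sum_nonneg
  intro k hk
  obtain ⟨hk1, hk2⟩ := Finset.mem_Icc.mp hk
  have hkn : (k:ℝ) ≤ n := by exact_mod_cast hk2
  have hnp : (0:ℝ) < n := by positivity
  have : (k:ℝ)/n ≤ 1 := (div_le_one hnp).mpr hkn
  apply div_nonneg (by linarith) (by positivity)
end

section
/- There exist a constant c > 0 and N₀ such that for all n ≥ N₀, the functions g_n(t) = ∑_{k=1}^n (1 − k/n)(1/k) sin(kt) and e_n(t) = e^{int} satisfy ‖e_n g_n‖_U ≥ c log n, where ‖h‖_U = sup_N ‖S_N(h)‖_∞. -/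
open Real Complex MeasureTheory Filter

lemma intExpInt (m : ℤ) :
    (∫ θ in (-Real.pi)..Real.pi, Complex.exp (Complex.I * m * θ)) =
      if m = 0 then (2 * Real.pi : ℂ) else 0 := by
  rcases eq_or_ne m 0 with h | h
  · simp [h, two_mul]
  · rw [if_neg h]
    have hc : (Complex.I * m) ≠ 0 := by
      simp [Complex.I_ne_zero, Complex.ext_iff]
      exact_mod_cast fun hh => h (by exact_mod_cast hh)
    have hint : (∫ θ in (-Real.pi)..Real.pi, Complex.exp ((Complex.I * m) * θ)) =
        (Complex.exp ((Complex.I * m) * (Real.pi : ℝ)) -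
          Complex.exp ((Complex.I * m) * ((-Real.pi : ℝ) : ℂ))) / (Complex.I * m) :=
      integral_exp_mul_complex hc
    have hper : Complex.exp ((Complex.I * m) * ((Real.pi : ℝ) : ℂ)) =
        Complex.exp ((Complex.I * m) * ((-Real.pi : ℝ) : ℂ)) := by
      rw [show ((Complex.I * m) * ((Real.pi : ℝ) : ℂ)) =
          (Complex.I * m) * ((-Real.pi : ℝ) : ℂ) + (m : ℂ) * (2 * Real.pi * Complex.I) by
        push_cast; ring]
      rw [Complex.exp_add, Complex.exp_int_mul_two_pi_mul_I, mul_one]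
    simp only [mul_assoc] at hint hper ⊢
    rw [hint, hper, sub_self, zero_div]

lemma key (p m : ℤ) :
    (∫ θ in (-Real.pi)..Real.pi,
        Complex.exp (Complex.I * p * θ) * Complex.exp (-Complex.I * m * θ)) =
      if p = m then (2 * Real.pi : ℂ) else 0 := by
  have h : ∀ θ : ℝ, Complex.exp (Complex.I * p * θ) * Complex.exp (-Complex.I * m * θ)
      = Complex.exp (Complex.I * ((p - m : ℤ) : ℂ) * θ) := by
    intro θ; rw [← Complex.exp_add]; congr 1; push_cast; ring
  simp only [h]
  rw [intExpInt]
  simp [sub_eq_zero]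

lemma expand (n : ℕ) (θ : ℝ) :
    eFun n θ * gFun n θ =
      ∑ k ∈ Finset.Icc 1 n,
        ((1 - (k : ℂ) / n) * (1 / k) * (Complex.I / 2)) *
          (Complex.exp (Complex.I * (((n : ℤ) - k : ℤ) : ℂ) * θ) -
            Complex.exp (Complex.I * (((n : ℤ) + k : ℤ) : ℂ) * θ)) := by
  rw [eFun, gFun, Finset.mul_sum]
  refine Finset.sum_congr rfl fun k _ => ?_
  have hs : ((Real.sin ((k : ℝ) * θ) : ℝ) : ℂ) =
      (Complex.exp (-(((k : ℝ) * θ : ℝ) : ℂ) * Complex.I) -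
        Complex.exp ((((k : ℝ) * θ : ℝ) : ℂ) * Complex.I)) * Complex.I / 2 := by
    rw [Complex.ofReal_sin]; rfl
  have e1 : Complex.exp (Complex.I * (((n : ℤ) - k : ℤ) : ℂ) * θ) =
      Complex.exp (Complex.I * n * θ) *
        Complex.exp (-(((k : ℝ) * θ : ℝ) : ℂ) * Complex.I) := by
    rw [← Complex.exp_add]; congr 1; push_cast; ring
  have e2 : Complex.exp (Complex.I * (((n : ℤ) + k : ℤ) : ℂ) * θ) =
      Complex.exp (Complex.I * n * θ) *
        Complex.exp ((((k : ℝ) * θ : ℝ) : ℂ) * Complex.I) := by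
    rw [← Complex.exp_add]; congr 1; push_cast; ring
  rw [hs, e1, e2]; ring

lemma fcf (n : ℕ) (m : ℤ) :
    fc (fun θ => eFun n θ * gFun n θ) m =
      ∑ k ∈ Finset.Icc 1 n,
        ((1 - (k : ℂ) / n) * (1 / k) * (Complex.I / 2)) *
          ((if ((n : ℤ) - k : ℤ) = m then 1 else 0) -
            (if ((n : ℤ) + k : ℤ) = m then 1 else 0)) := by
  rw [fc]
  have hint : ∀ (p : ℤ), IntervalIntegrable
      (fun θ : ℝ => Complex.exp (Complex.I * (p : ℂ) * θ) * Complex.exp (-Complex.I * m * θ))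
      volume (-Real.pi) Real.pi := by
    intro p
    apply Continuous.intervalIntegrable
    fun_prop
  have : (∫ θ in (-Real.pi)..Real.pi,
      (eFun n θ * gFun n θ) * Complex.exp (-Complex.I * m * θ)) =
      ∑ k ∈ Finset.Icc 1 n,
        ((1 - (k : ℂ) / n) * (1 / k) * (Complex.I / 2)) *
          ((∫ θ in (-Real.pi)..Real.pi,
            Complex.exp (Complex.I * (((n : ℤ) - k : ℤ) : ℂ) * θ) *
              Complex.exp (-Complex.I * m * θ)) -
          (∫ θ in (-Real.pi)..Real.pi,
            Complex.exp (Complex.I * (((n : ℤ) + k : ℤ) : ℂ) * θ) *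
              Complex.exp (-Complex.I * m * θ))) := by
    rw [show (fun θ : ℝ => (eFun n θ * gFun n θ) * Complex.exp (-Complex.I * m * θ)) =
        fun θ : ℝ => ∑ k ∈ Finset.Icc 1 n,
          ((1 - (k : ℂ) / n) * (1 / k) * (Complex.I / 2)) *
            ((Complex.exp (Complex.I * (((n : ℤ) - k : ℤ) : ℂ) * θ) *
                Complex.exp (-Complex.I * m * θ)) -
              (Complex.exp (Complex.I * (((n : ℤ) + k : ℤ) : ℂ) * θ) *
                Complex.exp (-Complex.I * m * θ))) from funext fun θ => by
      rw [expand, Finset.sum_mul]; exact Finset.sum_congr rfl fun k _ => by ring]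
    rw [intervalIntegral.integral_finset_sum]
    · refine Finset.sum_congr rfl fun k _ => ?_
      rw [intervalIntegral.integral_const_mul, intervalIntegral.integral_sub (hint _) (hint _)]
    · intro k _
      apply IntervalIntegrable.const_mul
      exact (hint _).sub (hint _)
  rw [this, Finset.mul_sum]
  refine Finset.sum_congr rfl fun k _ => ?_
  rw [key, key]
  have hpi : (2 * (Real.pi : ℂ)) ≠ 0 := by
    simp [Complex.ext_iff, Real.pi_ne_zero]
  have h1 : (1 / (2 * (Real.pi : ℂ))) * (2 * (Real.pi : ℂ)) = 1 := by
    field_simp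
  have ha : ∀ (P : Prop) [Decidable P],
      (if P then (2 * Real.pi : ℂ) else 0) = (2 * (Real.pi : ℂ)) * (if P then 1 else 0) := by
    intro P _; split_ifs <;> simp
  rw [ha, ha]
  calc (1 / (2 * (Real.pi : ℂ))) *
        ((1 - (k : ℂ) / n) * (1 / k) * (Complex.I / 2) *
          ((2 * (Real.pi : ℂ)) * (if ((n : ℤ) - k : ℤ) = m then 1 else 0) -
            (2 * (Real.pi : ℂ)) * (if ((n : ℤ) + k : ℤ) = m then 1 else 0)))
      = ((1 / (2 * (Real.pi : ℂ))) * (2 * (Real.pi : ℂ))) *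
        ((1 - (k : ℂ) / n) * (1 / k) * (Complex.I / 2) *
          ((if ((n : ℤ) - k : ℤ) = m then 1 else 0) -
            (if ((n : ℤ) + k : ℤ) = m then 1 else 0))) := by ring
    _ = _ := by rw [h1, one_mul]

lemma pS_eval (n : ℕ) (hn : 1 ≤ n) :
    pS (fun θ => eFun n θ * gFun n θ) n 0 =
      (Complex.I / 2) * ∑ k ∈ Finset.Icc 1 n, (1 - (k : ℂ) / n) * (1 / k) := by
  rw [pS]
  simp only [fcf, Complex.ofReal_zero, mul_zero, Complex.exp_zero, mul_one]
  rw [Finset.sum_comm]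
  rw [Finset.mul_sum]
  refine Finset.sum_congr rfl fun k hk => ?_
  rw [Finset.mem_Icc] at hk
  rw [← Finset.mul_sum, Finset.sum_sub_distrib, Finset.sum_ite_eq, Finset.sum_ite_eq]
  rw [if_pos, if_neg]
  · ring
  · rw [Finset.mem_Icc]
    push_neg
    intro _
    omega
  · rw [Finset.mem_Icc]
    omega

lemma sum_eval (n : ℕ) (hn : 1 ≤ n) :
    ∑ k ∈ Finset.Icc 1 n, (1 - (k : ℂ) / n) * (1 / k) =
      (((harmonic n : ℝ) : ℂ)) - 1 := by
  have hn0 : (n : ℂ) ≠ 0 := Nat.cast_ne_zero.mpr (by omega)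
  have : ∀ k ∈ Finset.Icc 1 n, (1 - (k : ℂ) / n) * (1 / k) = 1 / k - 1 / n := by
    intro k hk
    rw [Finset.mem_Icc] at hk
    have hk0 : (k : ℂ) ≠ 0 := Nat.cast_ne_zero.mpr (by omega)
    field_simp
  rw [Finset.sum_congr rfl this, Finset.sum_sub_distrib, Finset.sum_const, Nat.card_Icc]
  have : harmonic n = ∑ i ∈ Finset.Icc 1 n, ((i : ℚ))⁻¹ := harmonic_eq_sum_Icc
  rw [this]
  push_cast
  rw [nsmul_eq_mul]
  rw [mul_one_div, div_self hn0]
  congr 1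
  exact Finset.sum_congr rfl fun k _ => by rw [one_div]

/-- `‖e_n g_n‖_{U(𝕋)} ≳ log n`: some symmetric partial sum of `e_n g_n` is
at least `c log n` in absolute value at some point. -/
theorem U_norm_lower_bound :
    ∃ c : ℝ, 0 < c ∧ ∃ N₀ : ℕ, ∀ n : ℕ, N₀ ≤ n →
      ∃ (N : ℕ) (t : ℝ),
        c * Real.log n ≤ ‖pS (fun θ => eFun n θ * gFun n θ) N t‖ := by
  refine ⟨1/4, by norm_num, 8, fun n hn => ⟨n, 0, ?_⟩⟩
  have hn1 : 1 ≤ n := by omega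
  rw [pS_eval n hn1, sum_eval n hn1]
  have habs : ‖(Complex.I / 2) * (((harmonic n : ℝ) : ℂ) - 1)‖ =
      (1/2) * |(harmonic n : ℝ) - 1| := by
    rw [show (((harmonic n : ℝ) : ℂ) - 1) = (((harmonic n : ℝ) - 1 : ℝ) : ℂ) by push_cast; ring]
    rw [norm_mul, norm_div, Complex.norm_I, Complex.norm_two, Complex.norm_real, Real.norm_eq_abs]
  rw [habs]
  have habs2 : (harmonic n : ℝ) - 1 ≤ |(harmonic n : ℝ) - 1| := le_abs_self _
  have hlog : Real.log n ≤ (harmonic n : ℝ) := by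
    calc Real.log n ≤ Real.log (n+1) := by
          apply Real.log_le_log (by positivity)
          push_cast; linarith
      _ ≤ (harmonic n : ℝ) := by exact_mod_cast log_add_one_le_harmonic n
  have hlog2 : (2 : ℝ) ≤ Real.log n := by
    calc (2:ℝ) ≤ 3 * Real.log 2 := by
          have := Real.log_two_gt_d9; nlinarith
      _ = Real.log 8 := by
          rw [show (8:ℝ) = 2^3 by norm_num, Real.log_pow]; push_cast; ring
      _ ≤ Real.log n := by
          apply Real.log_le_log (by norm_num)
          exact_mod_cast hn
  linarith
end

section
/- The functions g_n(t) = ∑_{k=1}^n (1 − k/n)(1/k) sin(kt) satisfy sup_n ‖g_n‖_U < ∞, where ‖h‖_U = sup_N ‖S_N(h)‖_∞. -/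
open Real Complex MeasureTheory Filter

lemma sin_sum_tele (t : ℝ) (j : ℕ) :
    2 * Real.sin (t/2) * ∑ i ∈ Finset.range j, Real.sin (i * t)
      = Real.cos (t/2) - Real.cos (((j : ℝ) - 1/2) * t) := by
  induction j with
  | zero =>
    have e : ((0:ℕ):ℝ) - 1/2 = -(1/2) := by norm_num
    rw [Finset.sum_range_zero, mul_zero, e, show (-(1/2) * t : ℝ) = -(t/2) by ring,
      Real.cos_neg]
    ring
  | succ j ih =>
    rw [Finset.sum_range_succ, mul_add, ih]
    have h : 2 * Real.sin (t/2) * Real.sin (j*t)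
        = Real.cos ((j:ℝ)*t - t/2) - Real.cos ((j:ℝ)*t + t/2) := by
      rw [Real.cos_sub, Real.cos_add]; ring
    have e1 : ((j:ℝ) - 1/2)*t = (j:ℝ)*t - t/2 := by ring
    have e2 : (((j+1 : ℕ):ℝ) - 1/2)*t = (j:ℝ)*t + t/2 := by push_cast; ring
    rw [e1, e2]
    linarith

/-- Kernel bound: for `t ∈ (0, π]`, partial sums of `sin (i t)` are bounded by `π/t`. -/
lemma kernel_bound {t : ℝ} (ht : 0 < t) (htπ : t ≤ π) (j : ℕ) :
    |∑ i ∈ Finset.range j, Real.sin (i * t)| ≤ π / t := by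
  have hs : t / π ≤ Real.sin (t/2) := by
    have := Real.mul_le_sin (x := t/2) (by linarith) (by linarith)
    calc t/π = 2/π * (t/2) := by ring
    _ ≤ Real.sin (t/2) := this
  have hπ := Real.pi_pos
  have hspos : 0 < Real.sin (t/2) := lt_of_lt_of_le (by positivity) hs
  have h2 := sin_sum_tele t j
  have hb : |2 * Real.sin (t/2) * ∑ i ∈ Finset.range j, Real.sin (i * t)| ≤ 2 := by
    rw [h2]
    have := Real.abs_cos_le_one (t/2)
    have := Real.abs_cos_le_one (((j : ℝ) - 1/2) * t)
    rw [abs_sub_le_iff] at *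
    constructor <;> linarith [(abs_le.1 (Real.abs_cos_le_one (t/2))),
      (abs_le.1 (Real.abs_cos_le_one (((j : ℝ) - 1/2) * t)))]
  rw [abs_mul, abs_of_pos (by positivity : (0:ℝ) < 2 * Real.sin (t/2))] at hb
  have h3 : |∑ i ∈ Finset.range j, Real.sin (i * t)| ≤ 1 / Real.sin (t/2) := by
    rw [le_div_iff₀ hspos]
    nlinarith
  refine h3.trans ?_
  rw [div_le_div_iff₀ hspos ht]
  calc 1 * t = t := one_mul t
  _ ≤ π * Real.sin (t/2) := by
      have := (div_le_iff₀ hπ).1 hs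
      linarith

lemma tele_Ioc (b : ℕ → ℝ) (a : ℕ) : ∀ c, a ≤ c →
    ∑ i ∈ Finset.Ioc a c, (b i - b (i+1)) = b (a+1) - b (c+1) := by
  intro c hc
  induction c, hc using Nat.le_induction with
  | base => simp
  | succ c hc ih => rw [Finset.sum_Ioc_succ_top (by omega), ih]; ring

lemma core0 (b : ℕ → ℝ) (hb0 : ∀ k, 0 ≤ b k) (hmono : ∀ k, b (k+1) ≤ b k)
    (hb : ∀ k, 1 ≤ k → b k * k ≤ 1) (m : ℕ) {t : ℝ} (ht : 0 < t) (htπ : t ≤ π) :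
    |∑ k ∈ Finset.Icc 1 m, b k * Real.sin (k*t)| ≤ 1 + 2*π := by
  have hπ := Real.pi_pos
  set M := ⌊1/t⌋₊ with hM
  have hMt : (M : ℝ) * t ≤ 1 := by
    have h1 : (M : ℝ) ≤ 1/t := Nat.floor_le (by positivity)
    calc (M:ℝ) * t ≤ (1/t) * t := by nlinarith
    _ = 1 := by field_simp
  have htM : 1 / ((M:ℝ) + 1) ≤ t := by
    have h2 : 1/t < (M:ℝ) + 1 := Nat.lt_floor_add_one (1/t)
    rw [div_le_iff₀ (by positivity)]
    rw [div_lt_iff₀ ht] at h2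
    nlinarith
  -- head bound
  have hhead : ∀ m' : ℕ, m' ≤ M → |∑ k ∈ Finset.Icc 1 m', b k * Real.sin (k*t)| ≤ 1 := by
    intro m' hm'
    calc |∑ k ∈ Finset.Icc 1 m', b k * Real.sin (k*t)|
        ≤ ∑ k ∈ Finset.Icc 1 m', |b k * Real.sin (k*t)| := Finset.abs_sum_le_sum_abs _ _
    _ ≤ ∑ k ∈ Finset.Icc 1 m', t := by
        apply Finset.sum_le_sum
        intro k hk
        have hk1 : 1 ≤ k := (Finset.mem_Icc.1 hk).1
        have hsin : |Real.sin (k*t)| ≤ (k:ℝ) * t := by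
          have h5 := Real.abs_sin_le_abs (x := (k:ℝ)*t)
          rwa [_root_.abs_of_nonneg (show (0:ℝ) ≤ (k:ℝ)*t by positivity)] at h5
        rw [abs_mul, _root_.abs_of_nonneg (hb0 k)]
        calc b k * |Real.sin (k*t)| ≤ b k * ((k:ℝ)*t) :=
              mul_le_mul_of_nonneg_left hsin (hb0 k)
        _ = (b k * k) * t := by ring
        _ ≤ 1 * t := by nlinarith [hb k hk1]
        _ = t := one_mul t
    _ = (m' : ℝ) * t := by rw [Finset.sum_const, Nat.card_Icc]; simp [nsmul_eq_mul]
    _ ≤ (M : ℝ) * t := by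
        have : (m':ℝ) ≤ M := by exact_mod_cast hm'
        nlinarith
    _ ≤ 1 := hMt
  by_cases hcase : m ≤ M
  · exact (hhead m hcase).trans (by linarith)
  · push_neg at hcase
    have key : ∑ k ∈ Finset.Icc 1 m, b k * Real.sin (k*t)
        = (∑ k ∈ Finset.Icc 1 M, b k * Real.sin (k*t))
          + ∑ k ∈ Finset.Ioc M m, b k * Real.sin (k*t) := by
      rw [show Finset.Icc 1 m = Finset.Ioc 0 m from Finset.Icc_add_one_left_eq_Ioc 0 m,
        show Finset.Icc 1 M = Finset.Ioc 0 M from Finset.Icc_add_one_left_eq_Ioc 0 M,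
        Finset.sum_Ioc_consecutive _ (Nat.zero_le M) hcase.le]
    have hGb : ∀ j, |∑ i ∈ Finset.range j, Real.sin ((i:ℝ)*t)| ≤ π/t := kernel_bound ht htπ
    have habel := Finset.sum_Ioc_by_parts b (fun i => Real.sin ((i:ℝ)*t)) hcase
    simp only [smul_eq_mul] at habel
    have hbM1 : b (M+1) ≤ t := by
      have h6 := hb (M+1) (by omega)
      have h7 : ((M+1:ℕ):ℝ) = (M:ℝ)+1 := by push_cast; ring
      rw [h7] at h6
      have h8 : (0:ℝ) < (M:ℝ)+1 := by positivity
      rw [div_le_iff₀ h8] at htM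
      nlinarith [hb0 (M+1)]
    have hthird : |∑ i ∈ Finset.Ioc M (m-1), (b (i+1) - b i)
          * ∑ k ∈ Finset.range (i+1), Real.sin ((k:ℝ)*t)|
        ≤ (b (M+1) - b m) * (π/t) := by
      calc |∑ i ∈ Finset.Ioc M (m-1), (b (i+1) - b i)
            * ∑ k ∈ Finset.range (i+1), Real.sin ((k:ℝ)*t)|
          ≤ ∑ i ∈ Finset.Ioc M (m-1), |(b (i+1) - b i)
            * ∑ k ∈ Finset.range (i+1), Real.sin ((k:ℝ)*t)| := Finset.abs_sum_le_sum_abs _ _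
      _ ≤ ∑ i ∈ Finset.Ioc M (m-1), (b i - b (i+1)) * (π/t) := by
          apply Finset.sum_le_sum
          intro i _
          rw [abs_mul]
          have e9 : |b (i+1) - b i| = b i - b (i+1) := by
            rw [abs_sub_comm]; exact _root_.abs_of_nonneg (by linarith [hmono i])
          rw [e9]
          exact mul_le_mul_of_nonneg_left (hGb (i+1)) (by linarith [hmono i])
      _ = (b (M+1) - b m) * (π/t) := by
          have e : m - 1 + 1 = m := by omega
          rw [← Finset.sum_mul, tele_Ioc b M (m-1) (by omega), e]
    have htail : |∑ k ∈ Finset.Ioc M m, b k * Real.sin ((k:ℝ)*t)| ≤ 2*π := by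
      rw [habel]
      have hA := hGb (m+1)
      have hB := hGb (M+1)
      have hπt : 0 < π/t := by positivity
      have h10 : |b m * ∑ i ∈ Finset.range (m+1), Real.sin ((i:ℝ)*t)| ≤ b m * (π/t) := by
        rw [abs_mul, _root_.abs_of_nonneg (hb0 m)]
        exact mul_le_mul_of_nonneg_left hA (hb0 m)
      have h11 : |b (M+1) * ∑ i ∈ Finset.range (M+1), Real.sin ((i:ℝ)*t)|
          ≤ b (M+1) * (π/t) := by
        rw [abs_mul, _root_.abs_of_nonneg (hb0 (M+1))]
        exact mul_le_mul_of_nonneg_left hB (hb0 (M+1))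
      have hbm : b m ≤ b (M+1) := by
        have : Antitone b := antitone_nat_of_succ_le hmono
        exact this (by omega)
      have h12 : 2 * b (M+1) * (π/t) ≤ 2*π := by
        have : b (M+1) * (π/t) ≤ t * (π/t) :=
          mul_le_mul_of_nonneg_right hbM1 (le_of_lt hπt)
        have ht' : t * (π/t) = π := by field_simp
        nlinarith
      calc |b m * (∑ i ∈ Finset.range (m+1), Real.sin ((i:ℝ)*t))
            - b (M+1) * (∑ i ∈ Finset.range (M+1), Real.sin ((i:ℝ)*t))
            - ∑ i ∈ Finset.Ioc M (m-1), (b (i+1) - b i)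
              * ∑ k ∈ Finset.range (i+1), Real.sin ((k:ℝ)*t)|
          ≤ b m * (π/t) + b (M+1) * (π/t) + (b (M+1) - b m) * (π/t) := by
            have := abs_sub (b m * (∑ i ∈ Finset.range (m+1), Real.sin ((i:ℝ)*t))
              - b (M+1) * (∑ i ∈ Finset.range (M+1), Real.sin ((i:ℝ)*t)))
              (∑ i ∈ Finset.Ioc M (m-1), (b (i+1) - b i)
              * ∑ k ∈ Finset.range (i+1), Real.sin ((k:ℝ)*t))
            have h13 := abs_sub (b m * (∑ i ∈ Finset.range (m+1), Real.sin ((i:ℝ)*t)))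
              (b (M+1) * (∑ i ∈ Finset.range (M+1), Real.sin ((i:ℝ)*t)))
            calc |b m * (∑ i ∈ Finset.range (m+1), Real.sin ((i:ℝ)*t))
                - b (M+1) * (∑ i ∈ Finset.range (M+1), Real.sin ((i:ℝ)*t))
                - ∑ i ∈ Finset.Ioc M (m-1), (b (i+1) - b i)
                  * ∑ k ∈ Finset.range (i+1), Real.sin ((k:ℝ)*t)|
                ≤ |b m * (∑ i ∈ Finset.range (m+1), Real.sin ((i:ℝ)*t))
                - b (M+1) * (∑ i ∈ Finset.range (M+1), Real.sin ((i:ℝ)*t))|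
                + |∑ i ∈ Finset.Ioc M (m-1), (b (i+1) - b i)
                  * ∑ k ∈ Finset.range (i+1), Real.sin ((k:ℝ)*t)| := abs_sub _ _
            _ ≤ b m * (π/t) + b (M+1) * (π/t) + (b (M+1) - b m) * (π/t) := by
                have h14 := (abs_sub _ _).trans (add_le_add h10 h11)
                linarith [hthird]
      _ = 2 * b (M+1) * (π/t) := by ring
      _ ≤ 2*π := h12
    rw [key]
    calc |(∑ k ∈ Finset.Icc 1 M, b k * Real.sin (k*t))
          + ∑ k ∈ Finset.Ioc M m, b k * Real.sin (k*t)|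
        ≤ |∑ k ∈ Finset.Icc 1 M, b k * Real.sin (k*t)|
          + |∑ k ∈ Finset.Ioc M m, b k * Real.sin (k*t)| := abs_add_le _ _
    _ ≤ 1 + 2*π := add_le_add (hhead M le_rfl) htail

lemma core (b : ℕ → ℝ) (hb0 : ∀ k, 0 ≤ b k) (hmono : ∀ k, b (k+1) ≤ b k)
    (hb : ∀ k, 1 ≤ k → b k * k ≤ 1) (m : ℕ) (t : ℝ) :
    |∑ k ∈ Finset.Icc 1 m, b k * Real.sin (k*t)| ≤ 1 + 2*π := by
  have hπ := Real.pi_pos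
  set r : ℤ := round (t/(2*π)) with hr
  set u : ℝ := t - r*(2*π) with hu
  have hsin : ∀ k : ℕ, Real.sin ((k:ℝ)*t) = Real.sin ((k:ℝ)*u) := by
    intro k
    have e : (k:ℝ)*t = (k:ℝ)*u + (((k:ℤ)*r : ℤ):ℝ)*(2*π) := by push_cast; ring
    rw [e, Real.sin_add_int_mul_two_pi]
  simp only [hsin]
  have hub : |u| ≤ π := by
    have h1 : |t/(2*π) - r| ≤ 1/2 := abs_sub_round _
    have e : u = (t/(2*π) - r)*(2*π) := by field_simp [hu]; ring
    rw [e, abs_mul, _root_.abs_of_pos (show (0:ℝ) < 2*π by positivity)]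
    nlinarith
  rcases lt_trichotomy u 0 with hneg | hzero | hpos
  · have e : (∑ k ∈ Finset.Icc 1 m, b k * Real.sin ((k:ℝ)*u))
        = -(∑ k ∈ Finset.Icc 1 m, b k * Real.sin ((k:ℝ)*(-u))) := by
      rw [← Finset.sum_neg_distrib]
      apply Finset.sum_congr rfl
      intro k _
      rw [mul_neg, Real.sin_neg]; ring
    rw [e, abs_neg]
    exact core0 b hb0 hmono hb m (t := -u) (by linarith) (by linarith [(abs_le.1 hub).1])
  · simp [hzero]
    positivity
  · exact core0 b hb0 hmono hb m hpos (by linarith [(abs_le.1 hub).2])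

lemma int_exp (m : ℤ) :
    (∫ θ in (-π:ℝ)..π, Complex.exp ((m:ℂ) * θ * I)) = if m = 0 then (2*π:ℂ) else 0 := by
  by_cases hm : m = 0
  · rw [if_pos hm]
    simp only [hm, Int.cast_zero, zero_mul, Complex.exp_zero]
    rw [intervalIntegral.integral_const]
    rw [Complex.real_smul]
    push_cast
    ring
  · rw [if_neg hm]
    have hc : ((m:ℂ) * Complex.I) ≠ 0 :=
      mul_ne_zero (by exact_mod_cast hm) Complex.I_ne_zero
    have e : ∀ θ:ℝ, (m:ℂ) * (θ:ℂ) * Complex.I = ((m:ℂ)*Complex.I) * (θ:ℂ) := fun θ => by ring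
    simp_rw [e]
    rw [integral_exp_mul_complex hc]
    have h2 : Complex.exp ((m:ℂ)*Complex.I*((π:ℝ):ℂ))
        = Complex.exp ((m:ℂ)*Complex.I*(((-π:ℝ)):ℂ)) := by
      rw [show ((m:ℂ)*Complex.I*((π:ℝ):ℂ)) = (m:ℂ)*Complex.I*(((-π:ℝ)):ℂ)
          + (m:ℂ)*(2*(π:ℝ)*Complex.I) by push_cast; ring,
        Complex.exp_add, Complex.exp_int_mul_two_pi_mul_I, mul_one]
    rw [h2, sub_self, zero_div]

lemma sin_as_exp (x : ℝ) :
    ((Real.sin x : ℝ) : ℂ)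
      = (Complex.exp ((x:ℂ) * Complex.I) - Complex.exp (-(x:ℂ) * Complex.I)) / (2*Complex.I) := by
  rw [Complex.exp_mul_I, Complex.exp_mul_I, Complex.cos_neg, Complex.sin_neg,
    ← Complex.ofReal_sin]
  field_simp [Complex.I_ne_zero]
  ring_nf

lemma term_int (j : ℤ) (k : ℕ) :
    (∫ θ in (-π:ℝ)..π, ((Real.sin (k*θ) : ℝ) : ℂ) * Complex.exp (-Complex.I*(j:ℂ)*(θ:ℂ)))
      = ((if (k:ℤ) = j then (2*π:ℂ) else 0) - (if -(k:ℤ) = j then (2*π:ℂ) else 0)) / (2*Complex.I) := by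
  have e : ∀ θ : ℝ, ((Real.sin (k*θ) : ℝ) : ℂ) * Complex.exp (-Complex.I*(j:ℂ)*(θ:ℂ))
      = (Complex.exp ((((k:ℤ) - j : ℤ):ℂ) * (θ:ℂ) * Complex.I)
        - Complex.exp (((-(k:ℤ) - j : ℤ):ℂ) * (θ:ℂ) * Complex.I)) / (2*Complex.I) := by
    intro θ
    rw [sin_as_exp ((k:ℝ)*θ)]
    rw [div_mul_eq_mul_div, sub_mul, ← Complex.exp_add, ← Complex.exp_add]
    congr 3 <;> push_cast <;> ring
  simp_rw [e]
  rw [intervalIntegral.integral_div]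
  rw [intervalIntegral.integral_sub]
  · rw [int_exp, int_exp]
    simp only [sub_eq_zero]
  · exact (Continuous.intervalIntegrable (by continuity) _ _)
  · exact (Continuous.intervalIntegrable (by continuity) _ _)

lemma fc_gFun (n : ℕ) (j : ℤ) :
    fc (gFun n) j = (1/((2*π:ℝ):ℂ)) * ∑ k ∈ Finset.Icc 1 n, (1 - (k:ℂ)/n) * (1/k)
      * (((if (k:ℤ) = j then ((2*π:ℝ):ℂ) else 0)
        - (if -(k:ℤ) = j then ((2*π:ℝ):ℂ) else 0)) / (2*Complex.I)) := by
  have hcont : ∀ k ∈ Finset.Icc 1 n, IntervalIntegrable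
      (fun θ : ℝ => (1 - (k:ℂ)/n) * (1/(k:ℂ))
        * (((Real.sin (k*θ):ℝ):ℂ) * Complex.exp (-Complex.I*(j:ℂ)*(θ:ℂ))))
      MeasureTheory.volume (-π) π := by
    intro k _
    apply Continuous.intervalIntegrable
    continuity
  rw [fc]
  have e : ∀ θ : ℝ, gFun n θ * Complex.exp (-Complex.I*(j:ℂ)*(θ:ℂ))
      = ∑ k ∈ Finset.Icc 1 n, (1 - (k:ℂ)/n) * (1/(k:ℂ))
        * (((Real.sin (k*θ):ℝ):ℂ) * Complex.exp (-Complex.I*(j:ℂ)*(θ:ℂ))) := by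
    intro θ
    rw [gFun, Finset.sum_mul]
    exact Finset.sum_congr rfl fun k _ => by ring
  simp_rw [e]
  rw [intervalIntegral.integral_finset_sum hcont]
  congr 1
  · push_cast; ring
  apply Finset.sum_congr rfl
  intro k _
  rw [intervalIntegral.integral_const_mul, term_int]
  push_cast
  ring

lemma helper1 (w c z : ℂ) (hw : w ≠ 0) :
    (1/w) * (c * ((w - 0)/(2*Complex.I)) * z) = c/(2*Complex.I)*(z - 0) := by
  field_simp; ring

lemma helper2 (w c z : ℂ) (hw : w ≠ 0) :
    (1/w) * (c * ((0 - w)/(2*Complex.I)) * z) = c/(2*Complex.I)*(0 - z) := by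
  field_simp; ring

lemma helper3 (w c z : ℂ) : (1/w) * (c * ((w - w)/(2*Complex.I)) * z) = c/(2*Complex.I)*(z - z) := by
  simp

lemma helper4 (w c z : ℂ) : (1/w) * (c * ((0 - 0)/(2*Complex.I)) * z) = c/(2*Complex.I)*(0 - 0) := by
  simp

lemma pS_gFun (n : ℕ) (N : ℕ) (t : ℝ) :
    pS (gFun n) N t
      = ((∑ k ∈ Finset.Icc 1 (min n N), (1 - (k:ℝ)/n) * (1/(k:ℝ)) * Real.sin (k*t) : ℝ) : ℂ) := by
  rw [pS]
  have e1 : ∀ j : ℤ, fc (gFun n) j * Complex.exp (Complex.I * (j:ℂ) * (t:ℂ))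
      = ∑ k ∈ Finset.Icc 1 n, ((1 - (k:ℂ)/n) * (1/(k:ℂ)) / (2*Complex.I))
        * ((if (k:ℤ) = j then Complex.exp (Complex.I*(j:ℂ)*(t:ℂ)) else 0)
          - (if -(k:ℤ) = j then Complex.exp (Complex.I*(j:ℂ)*(t:ℂ)) else 0)) := by
    intro j
    rw [fc_gFun, mul_assoc, Finset.sum_mul, Finset.mul_sum]
    apply Finset.sum_congr rfl
    intro k _
    have hw : ((2*π:ℝ):ℂ) ≠ 0 := Complex.ofReal_ne_zero.2 (by positivity)
    have hc : (1 - (k:ℂ)/n) * (1/(k:ℂ)) / (2*Complex.I)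
        = ((1 - (k:ℂ)/n) * (1/(k:ℂ))) / (2*Complex.I) := rfl
    split_ifs
    · exact helper3 _ _ _
    · exact helper1 _ _ _ hw
    · exact helper2 _ _ _ hw
    · exact helper4 _ _ _
  simp_rw [e1]
  rw [Finset.sum_comm]
  have e2 : ∀ k ∈ Finset.Icc 1 n,
      (∑ j ∈ Finset.Icc (-(N:ℤ)) (N:ℤ), ((1 - (k:ℂ)/n) * (1/(k:ℂ)) / (2*Complex.I))
        * ((if (k:ℤ) = j then Complex.exp (Complex.I*(j:ℂ)*(t:ℂ)) else 0)
          - (if -(k:ℤ) = j then Complex.exp (Complex.I*(j:ℂ)*(t:ℂ)) else 0)))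
      = if k ≤ N then ((1 - (k:ℂ)/n) * (1/(k:ℂ))) * ((Real.sin (k*t):ℝ):ℂ) else 0 := by
    intro k hk
    rw [← Finset.mul_sum, Finset.sum_sub_distrib, Finset.sum_ite_eq, Finset.sum_ite_eq]
    have m1 : ((k:ℤ) ∈ Finset.Icc (-(N:ℤ)) (N:ℤ)) ↔ k ≤ N := by
      simp [Finset.mem_Icc]
    have m2 : ((-(k:ℤ)) ∈ Finset.Icc (-(N:ℤ)) (N:ℤ)) ↔ k ≤ N := by
      simp [Finset.mem_Icc]
    by_cases hkN : k ≤ N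
    · rw [if_pos (m1.2 hkN), if_pos (m2.2 hkN), if_pos hkN]
      have a1 : Complex.I * (((k:ℤ):ℤ):ℂ) * (t:ℂ) = (((k:ℝ)*t : ℝ):ℂ) * Complex.I := by
        push_cast; ring
      have a2 : Complex.I * (((-(k:ℤ)):ℤ):ℂ) * (t:ℂ) = -(((k:ℝ)*t : ℝ):ℂ) * Complex.I := by
        push_cast; ring
      rw [a1, a2, sin_as_exp]
      push_cast
      ring
    · rw [if_neg (fun h => hkN (m1.1 h)), if_neg (fun h => hkN (m2.1 h)), if_neg hkN]
      ring
  rw [Finset.sum_congr rfl e2, ← Finset.sum_filter]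
  have hf : Finset.filter (fun k => k ≤ N) (Finset.Icc 1 n) = Finset.Icc 1 (min n N) := by
    ext k; simp [Finset.mem_filter, Finset.mem_Icc]; omega
  rw [hf, Complex.ofReal_sum]
  apply Finset.sum_congr rfl
  intro k _
  push_cast
  ring

theorem gFun_U_norm_bounded :
    ∃ C : ℝ, ∀ n : ℕ, 1 ≤ n → ∀ (N : ℕ) (t : ℝ),
      ‖pS (gFun n) N t‖ ≤ C := by
  refine ⟨1 + 2*π, ?_⟩
  intro n hn N t
  rw [pS_gFun, Complex.norm_real, Real.norm_eq_abs]
  have hn0 : (0:ℝ) < n := by exact_mod_cast (by omega : 0 < n)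
  set b : ℕ → ℝ := fun k => if k = 0 then 1 else (if k ≤ n then 1/k - 1/n else 0) with hbdef
  have hval : ∀ k, 1 ≤ k → k ≤ n → b k = 1/k - 1/n := by
    intro k h1 h2
    rw [hbdef]
    simp only [if_neg (by omega : ¬ k = 0), if_pos h2]
  have hsum : ∑ k ∈ Finset.Icc 1 (min n N), (1 - (k:ℝ)/n) * (1/(k:ℝ)) * Real.sin (k*t)
      = ∑ k ∈ Finset.Icc 1 (min n N), b k * Real.sin (k*t) := by
    apply Finset.sum_congr rfl
    intro k hk
    obtain ⟨hk1, hk2⟩ := Finset.mem_Icc.1 hk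
    have hkn : k ≤ n := le_trans hk2 (min_le_left _ _)
    have hk0 : (0:ℝ) < k := by exact_mod_cast (by omega : 0 < k)
    rw [hval k hk1 hkn, sub_mul, one_mul]
    congr 2
    rw [div_mul_div_comm, mul_one, div_eq_div_iff (by positivity) (by positivity)]
    ring
  rw [hsum]
  have hb0 : ∀ k, 0 ≤ b k := by
    intro k
    rw [hbdef]
    dsimp only
    split_ifs with h1 h2
    · norm_num
    · have hk0 : (0:ℝ) < k := by exact_mod_cast (by omega : 0 < k)
      have hle : (k:ℝ) ≤ n := by exact_mod_cast h2
      have := one_div_le_one_div_of_le hk0 hle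
      linarith
    · exact le_refl _
  have hmono : ∀ k, b (k+1) ≤ b k := by
    intro k
    rcases Nat.eq_zero_or_pos k with rfl | hk
    · rw [hbdef]
      dsimp only
      rw [if_pos rfl]
      have h9 : (0:ℝ) ≤ 1/(n:ℝ) := by positivity
      split_ifs <;> norm_num <;> linarith
    · have hk0 : (0:ℝ) < k := by exact_mod_cast hk
      rw [hbdef]
      dsimp only
      rw [if_neg (by omega : ¬ k + 1 = 0), if_neg (by omega : ¬ k = 0)]
      split_ifs with h1 h2 h3
      · have : (k:ℝ) ≤ (k:ℝ)+1 := by linarith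
        have h4 := one_div_le_one_div_of_le hk0 this
        push_cast
        linarith
      · omega
      · have hle : (k:ℝ) ≤ n := by exact_mod_cast h3
        have := one_div_le_one_div_of_le hk0 hle
        push_cast
        linarith
      · exact le_refl _
  have hb : ∀ k, 1 ≤ k → b k * k ≤ 1 := by
    intro k h1
    have hk0 : (0:ℝ) < k := by exact_mod_cast (by omega : 0 < k)
    rw [hbdef]
    dsimp only
    rw [if_neg (by omega : ¬ k = 0)]
    split_ifs with h2
    · have : (1/(k:ℝ) - 1/n) * k ≤ (1/(k:ℝ)) * k := by
        have : (0:ℝ) ≤ 1/n := by positivity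
        nlinarith
      rw [one_div_mul_cancel (ne_of_gt hk0)] at this
      nlinarith [this]
    · nlinarith
  exact core b hb0 hmono hb (min n N) t
end

section
/- If f is a continuous 2π-periodic function with ∑_{k∈ℤ}|f̂(k)| < ∞ and g is a continuous 2π-periodic function whose one-sided (analytic) partial sums ∑_{0≤k≤N} ĝ(k)e^{ikt} converge uniformly, with ĝ(k) = 0 for k < 0 and f̂(k) = 0 for k < 0, then the partial sums ∑_{0≤k≤N} (f g)^(k)e^{ikt} converge uniformly to fg. -/
open Real Complex MeasureTheory Filter Topology

lemma fc_eq_fourierCoeff {f : ℝ → ℂ} (hp : Function.Periodic f (2 * Real.pi)) (n : ℤ) :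
    haveI : Fact (0 < 2 * Real.pi) := ⟨Real.two_pi_pos⟩
    fc f n = fourierCoeff hp.lift n := by
  haveI : Fact (0 < 2 * Real.pi) := ⟨Real.two_pi_pos⟩
  rw [fourierCoeff_eq_intervalIntegral _ n (-Real.pi),
    show -Real.pi + 2 * Real.pi = Real.pi by ring, fc, Complex.real_smul]
  push_cast
  congr 1
  apply intervalIntegral.integral_congr
  intro x hx
  simp only []
  rw [smul_eq_mul, Function.Periodic.lift_coe, fourier_coe_apply, mul_comm]
  congr 1
  have hπ : (Real.pi : ℂ) ≠ 0 := Complex.ofReal_ne_zero.mpr Real.pi_ne_zero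
  push_cast
  rw [show 2*(Real.pi:ℂ)*Complex.I*(-n)*x/(2*Real.pi) = -Complex.I*n*x*(Real.pi/Real.pi) by ring,
    div_self hπ, mul_one]

lemma fourier_eq (i : ℤ) (t : ℝ) :
    haveI : Fact (0 < 2 * Real.pi) := ⟨Real.two_pi_pos⟩
    (fourier i (t : AddCircle (2 * Real.pi)) : ℂ) = Complex.exp (Complex.I * i * t) := by
  haveI : Fact (0 < 2 * Real.pi) := ⟨Real.two_pi_pos⟩
  rw [fourier_coe_apply]
  congr 1
  have hπ : (Real.pi : ℂ) ≠ 0 := Complex.ofReal_ne_zero.mpr Real.pi_ne_zero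
  push_cast
  rw [show 2*(Real.pi:ℂ)*Complex.I*i*t/(2*Real.pi) = Complex.I*i*t*(Real.pi/Real.pi) by ring,
    div_self hπ, mul_one]

lemma hasSum_fc {f : ℝ → ℂ} (hc : Continuous f) (hp : Function.Periodic f (2 * Real.pi))
    (habs : Summable (fun k : ℤ => ‖fc f k‖)) (t : ℝ) :
    HasSum (fun k : ℤ => fc f k * Complex.exp (Complex.I * k * t)) (f t) := by
  haveI : Fact (0 < 2 * Real.pi) := ⟨Real.two_pi_pos⟩
  have hliftc : Continuous hp.lift := continuous_coinduced_dom.mpr hc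
  set F : C(AddCircle (2 * Real.pi), ℂ) := ⟨hp.lift, hliftc⟩ with hF
  have hcoeff : ∀ n : ℤ, fourierCoeff (⇑F) n = fc f n := fun n => (fc_eq_fourierCoeff hp n).symm
  have hsum : Summable (fourierCoeff (⇑F)) := by
    apply Summable.of_norm
    apply habs.congr
    intro k
    rw [hcoeff k]
  have h := has_pointwise_sum_fourier_series_of_summable hsum (t : AddCircle (2 * Real.pi))
  have hft : F (t : AddCircle (2 * Real.pi)) = f t := hp.lift_coe t
  rw [hft] at h
  apply h.congr_fun
  intro k
  rw [smul_eq_mul, hcoeff, _root_.fourier_eq]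

lemma hasSum_fc_nat {f : ℝ → ℂ} (hc : Continuous f) (hp : Function.Periodic f (2 * Real.pi))
    (habs : Summable (fun k : ℤ => ‖fc f k‖))
    (hanal : ∀ k : ℤ, k < 0 → fc f k = 0) (t : ℝ) :
    HasSum (fun j : ℕ => fc f j * Complex.exp (Complex.I * j * t)) (f t) := by
  have h := hasSum_fc hc hp habs t
  have hinj : Function.Injective (fun n : ℕ => (n : ℤ)) := fun a b h => by simpa using h
  rw [← hinj.hasSum_iff] at h
  · exact h
  · intro x hx
    have hneg : x < 0 := by
      rcases Int.lt_or_le x 0 with h' | h'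
      · exact h'
      · exact absurd ⟨x.toNat, by simp [Int.toNat_of_nonneg h']⟩ hx
    simp [hanal x hneg]

lemma exp_norm_one (m : ℤ) (θ : ℝ) : ‖Complex.exp (Complex.I * m * θ)‖ = 1 := by
  rw [Complex.norm_exp]
  norm_num [Complex.mul_re, Complex.mul_im]

lemma exp_norm_one' (m : ℤ) (θ : ℝ) : ‖Complex.exp (-Complex.I * m * θ)‖ = 1 := by
  rw [Complex.norm_exp]
  norm_num [Complex.mul_re, Complex.mul_im]

lemma exp_norm_oneN (m : ℕ) (θ : ℝ) : ‖Complex.exp (Complex.I * m * θ)‖ = 1 := by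
  rw [Complex.norm_exp]
  norm_num [Complex.mul_re, Complex.mul_im]

lemma fc_mul {f g : ℝ → ℂ} (hfc : Continuous f) (hgc : Continuous g)
    (hfN : ∀ t : ℝ, HasSum (fun j : ℕ => fc f j * Complex.exp (Complex.I * j * t)) (f t))
    (habsN : Summable (fun j : ℕ => ‖fc f j‖))
    (hg_anal : ∀ k : ℤ, k < 0 → fc g k = 0) (k : ℕ) :
    fc (fun θ => f θ * g θ) k
      = ∑ j ∈ Finset.range (k + 1), fc f j * fc g ((k : ℤ) - j) := by
  have hπ : ((2 : ℂ) * Real.pi) ≠ 0 := by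
    simp [Real.pi_ne_zero, Complex.ofReal_ne_zero]
  obtain ⟨C, hC⟩ : ∃ C, ∀ x ∈ Set.uIcc (-Real.pi) Real.pi, ‖g x‖ ≤ C :=
    (isCompact_uIcc).exists_bound_of_continuousOn hgc.continuousOn
  set F : ℕ → ℝ → ℂ := fun j θ =>
    (fc f j * Complex.exp (Complex.I * j * θ)) * (g θ * Complex.exp (-Complex.I * k * θ)) with hF
  have key : HasSum (fun j => ∫ θ in (-Real.pi)..Real.pi, F j θ)
      (∫ θ in (-Real.pi)..Real.pi, (f θ * g θ) * Complex.exp (-Complex.I * k * θ)) := by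
    apply intervalIntegral.hasSum_integral_of_dominated_convergence
      (F := F) (bound := fun j θ => ‖fc f j‖ * C)
    · intro j
      apply Continuous.aestronglyMeasurable
      continuity
    · intro j
      filter_upwards with θ hθ
      have h1 : θ ∈ Set.uIcc (-Real.pi) Real.pi := Set.uIoc_subset_uIcc hθ
      calc ‖F j θ‖ = ‖fc f j‖ * ‖g θ‖ := by
            simp [hF, map_mul, Complex.norm_exp, Complex.mul_re, Complex.mul_im]
        _ ≤ ‖fc f j‖ * C :=
            mul_le_mul_of_nonneg_left (hC θ h1) (norm_nonneg _)
    · filter_upwards with θ hθ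
      exact habsN.mul_right C
    · exact intervalIntegrable_const
    · filter_upwards with θ hθ
      have := (hfN θ).mul_right (g θ * Complex.exp (-Complex.I * k * θ))
      rw [← mul_assoc] at this
      exact this
  have hint : ∀ j : ℕ, (∫ θ in (-Real.pi)..Real.pi, F j θ)
      = fc f j * ((2 * Real.pi) * fc g ((k : ℤ) - j)) := by
    intro j
    have hrw : ∀ θ : ℝ, F j θ
        = fc f j * (g θ * Complex.exp (-Complex.I * ((k : ℤ) - j) * θ)) := by
      intro θ
      simp only [hF]
      rw [show (-Complex.I * (((k : ℤ) : ℂ) - (j : ℕ)) * (θ : ℂ))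
        = Complex.I * j * θ + -Complex.I * k * θ by push_cast; ring, Complex.exp_add]
      ring
    simp_rw [hrw]
    rw [intervalIntegral.integral_const_mul]
    congr 1
    rw [fc]
    field_simp
    simp only [Int.cast_sub, Int.cast_natCast]
  simp_rw [hint] at key
  have key2 := key.mul_left ((1 : ℂ) / (2 * Real.pi))
  have hterm : ∀ j : ℕ, (1 : ℂ) / (2 * Real.pi) * (fc f j * ((2 * Real.pi) * fc g ((k : ℤ) - j)))
      = fc f j * fc g ((k : ℤ) - j) := by
    intro j
    field_simp
  simp_rw [hterm] at key2
  have key3 : HasSum (fun j : ℕ => fc f j * fc g ((k : ℤ) - j))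
      (∑ j ∈ Finset.range (k + 1), fc f j * fc g ((k : ℤ) - j)) := by
    apply hasSum_sum_of_ne_finset_zero
    intro j hj
    have : ((k : ℤ) - j) < 0 := by
      simp only [Finset.mem_range, not_lt] at hj
      omega
    simp [hg_anal _ this]
  rw [fc]
  exact (key3.unique key2).symm

lemma stepC (N : ℕ) (a b : ℕ → ℂ) (E : ℕ → ℂ) (hE : ∀ j m, E (j + m) = E j * E m) :
    ∑ k ∈ Finset.range (N + 1), (∑ j ∈ Finset.range (k + 1), a j * b (k - j)) * E k
      = ∑ j ∈ Finset.range (N + 1), a j * E j * ∑ m ∈ Finset.range (N + 1 - j), b m * E m := by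
  simp_rw [Finset.sum_mul, Finset.mul_sum]
  rw [Finset.sum_sigma', Finset.sum_sigma']
  apply Finset.sum_nbij' (fun p => ⟨p.2, p.1 - p.2⟩) (fun p => ⟨p.1 + p.2, p.1⟩)
  · rintro ⟨k, j⟩ hp
    simp only [Finset.mem_sigma, Finset.mem_range] at hp ⊢
    omega
  · rintro ⟨j, m⟩ hp
    simp only [Finset.mem_sigma, Finset.mem_range] at hp ⊢
    omega
  · rintro ⟨k, j⟩ hp
    simp only [Finset.mem_sigma, Finset.mem_range] at hp
    simp only [Sigma.mk.inj_iff]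
    refine ⟨by omega, ?_⟩
    simp [heq_eq_eq]
  · rintro ⟨j, m⟩ hp
    simp only [Sigma.mk.inj_iff]
    refine ⟨trivial, ?_⟩
    simp
  · rintro ⟨k, j⟩ hp
    simp only [Finset.mem_sigma, Finset.mem_range] at hp
    have hk : k = j + (k - j) := by omega
    rw [hk, hE, Nat.add_sub_cancel_left]
    ring

theorem analytic_A_mul_U (f g : ℝ → ℂ)
    (hf_cont : Continuous f) (hf_per : Function.Periodic f (2 * Real.pi))
    (hg_cont : Continuous g) (hg_per : Function.Periodic g (2 * Real.pi))
    (hf_abs : Summable (fun k : ℤ => ‖fc f k‖))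
    (hf_anal : ∀ k : ℤ, k < 0 → fc f k = 0)
    (hg_anal : ∀ k : ℤ, k < 0 → fc g k = 0)
    (hg_unif : TendstoUniformly
      (fun N (t : ℝ) => ∑ k ∈ Finset.range (N + 1), fc g k * Complex.exp (Complex.I * k * t))
      g atTop) :
    TendstoUniformly
      (fun N (t : ℝ) => ∑ k ∈ Finset.range (N + 1),
        fc (fun θ => f θ * g θ) k * Complex.exp (Complex.I * k * t))
      (fun θ => f θ * g θ) atTop := by
  haveI : Fact (0 < 2 * Real.pi) := ⟨Real.two_pi_pos⟩
  set a : ℕ → ℝ := fun j => ‖fc f j‖ with ha_def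
  have ha_nonneg : ∀ j, 0 ≤ a j := fun j => norm_nonneg _
  have habsN : Summable a := by
    have := hf_abs.comp_injective (i := fun n : ℕ => (n : ℤ)) (fun x y h => by simpa using h)
    exact this
  have hfN : ∀ t : ℝ, HasSum (fun j : ℕ => fc f j * Complex.exp (Complex.I * j * t)) (f t) :=
    hasSum_fc_nat hf_cont hf_per hf_abs hf_anal
  have ha_norm : ∀ (j : ℕ) (t : ℝ), ‖fc f j * Complex.exp (Complex.I * j * t)‖ = a j := by
    intro j t
    rw [norm_mul, exp_norm_oneN, mul_one, ha_def]
  have hb_norm : ∀ (k : ℕ) (t : ℝ), ‖fc g k * Complex.exp (Complex.I * k * t)‖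
      = ‖fc g k‖ := by
    intro k t
    rw [norm_mul, exp_norm_oneN, mul_one]
  -- tails
  set r : ℕ → ℝ := fun n => ∑' i : ℕ, a (n + i) with hr_def
  have hshift : ∀ n : ℕ, Summable (fun i : ℕ => a (n + i)) := by
    intro n
    exact ((summable_nat_add_iff n).mpr habsN).congr (fun i => by rw [add_comm])
  have hr_nonneg : ∀ n, 0 ≤ r n := fun n => tsum_nonneg (fun i => ha_nonneg _)
  have hr0 : Tendsto r atTop (𝓝 0) := by
    have h := tendsto_sum_nat_add a
    apply h.congr
    intro n
    exact tsum_congr (fun i => by rw [add_comm])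
  have hfr : ∀ (n : ℕ) (t : ℝ),
      ‖f t - ∑ j ∈ Finset.range n, fc f j * Complex.exp (Complex.I * j * t)‖ ≤ r n := by
    intro n t
    have hsm : Summable (fun j : ℕ => fc f j * Complex.exp (Complex.I * j * t)) := (hfN t).summable
    have h1 := Summable.sum_add_tsum_nat_add (f := fun j : ℕ => fc f j * Complex.exp (Complex.I * j * t))
      n hsm
    rw [(hfN t).tsum_eq] at h1
    have h2 : f t - ∑ j ∈ Finset.range n, fc f j * Complex.exp (Complex.I * j * t)
        = ∑' i : ℕ, fc f ((i + n : ℕ)) * Complex.exp (Complex.I * ((i + n : ℕ)) * t) := by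
      rw [← h1]; ring
    rw [h2]
    calc ‖∑' i : ℕ, fc f ((i + n : ℕ)) * Complex.exp (Complex.I * ((i + n : ℕ)) * t)‖
        ≤ ∑' i : ℕ, ‖fc f ((i + n : ℕ)) * Complex.exp (Complex.I * ((i + n : ℕ)) * t)‖ := by
          apply norm_tsum_le_tsum_norm
          apply ((summable_nat_add_iff n).mpr habsN).congr
          intro i
          rw [ha_norm]
      _ = r n := by
          rw [hr_def]
          apply tsum_congr
          intro i
          rw [ha_norm, add_comm]
  have hIco : ∀ m n : ℕ, ∑ j ∈ Finset.Ico m n, a j ≤ r m := by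
    intro m n
    rw [Finset.sum_Ico_eq_sum_range]
    apply Summable.sum_le_tsum
    · intro i _
      exact ha_nonneg _
    · exact hshift m
  -- bound for g
  have hgliftc : Continuous hg_per.lift := continuous_coinduced_dom.mpr hg_cont
  set G : C(AddCircle (2 * Real.pi), ℂ) := ⟨hg_per.lift, hgliftc⟩ with hG
  set Cg : ℝ := ‖G‖ with hCg_def
  have hCg : ∀ t : ℝ, ‖g t‖ ≤ Cg := by
    intro t
    have : g t = G (t : AddCircle (2 * Real.pi)) := (hg_per.lift_coe t).symm
    rw [this]
    exact G.norm_coe_le_norm _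
  have hCg_nonneg : 0 ≤ Cg := norm_nonneg _
  -- uniform bound for partial sums of g
  rw [Metric.tendstoUniformly_iff] at hg_unif
  obtain ⟨N1, hN1⟩ := eventually_atTop.mp (hg_unif 1 one_pos)
  set B : ℝ := ∑ k ∈ Finset.range (N1 + 1), ‖fc g k‖ with hB_def
  have hB_nonneg : 0 ≤ B := Finset.sum_nonneg (fun k _ => norm_nonneg _)
  set C : ℝ := 1 + Cg + B with hC_def
  have hC_nonneg : 0 ≤ C := by positivity
  have hCbound : ∀ (m : ℕ) (t : ℝ),
      ‖g t - ∑ k ∈ Finset.range m, fc g k * Complex.exp (Complex.I * k * t)‖ ≤ C := by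
    intro m t
    rcases Nat.lt_or_ge m (N1 + 1) with hm | hm
    · calc ‖g t - ∑ k ∈ Finset.range m, fc g k * Complex.exp (Complex.I * k * t)‖
          ≤ ‖g t‖ + ‖∑ k ∈ Finset.range m, fc g k * Complex.exp (Complex.I * k * t)‖ :=
            norm_sub_le _ _
        _ ≤ Cg + B := by
            apply add_le_add (hCg t)
            calc ‖∑ k ∈ Finset.range m, fc g k * Complex.exp (Complex.I * k * t)‖
                ≤ ∑ k ∈ Finset.range m, ‖fc g k * Complex.exp (Complex.I * k * t)‖ :=
                  norm_sum_le _ _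
              _ = ∑ k ∈ Finset.range m, ‖fc g k‖ := by
                  apply Finset.sum_congr rfl
                  intro k _
                  rw [hb_norm]
              _ ≤ B := by
                  apply Finset.sum_le_sum_of_subset_of_nonneg
                  · exact Finset.range_subset_range.mpr (by omega)
                  · intro k _ _
                    exact norm_nonneg _
        _ ≤ C := by rw [hC_def]; linarith
    · have h := hN1 (m - 1) (by omega) t
      rw [show m - 1 + 1 = m by omega] at h
      rw [← dist_eq_norm]
      calc dist (g t) (∑ k ∈ Finset.range m, fc g k * Complex.exp (Complex.I * k * t)) ≤ 1 :=
            h.le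
        _ ≤ C := by rw [hC_def]; linarith
  -- total mass of a
  set A : ℝ := ∑' j, a j with hA_def
  have hA_nonneg : 0 ≤ A := tsum_nonneg ha_nonneg
  have hA_sum : ∀ s : Finset ℕ, ∑ j ∈ s, a j ≤ A :=
    fun s => Summable.sum_le_tsum s (fun i _ => ha_nonneg i) habsN
  -- convolution
  have hconv := fc_mul hf_cont hg_cont hfN habsN hg_anal
  -- main estimate
  rw [Metric.tendstoUniformly_iff]
  intro ε hε
  set D : ℝ := A + C + Cg + 1 with hD_def
  have hD_pos : 0 < D := by positivity
  set ε' : ℝ := ε / (2 * D) with hε'_def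
  have hε'_pos : 0 < ε' := by positivity
  obtain ⟨K, hK⟩ := eventually_atTop.mp (hr0.eventually_lt_const hε'_pos)
  obtain ⟨N0, hN0⟩ := eventually_atTop.mp (hg_unif ε' hε'_pos)
  refine eventually_atTop.mpr ⟨K + N0, fun N hN t => ?_⟩
  -- rewrite the partial sum of fg
  have hE : ∀ j m : ℕ, Complex.exp (Complex.I * ((j + m : ℕ) : ℂ) * t)
      = Complex.exp (Complex.I * j * t) * Complex.exp (Complex.I * m * t) := by
    intro j m
    rw [← Complex.exp_add]
    congr 1
    push_cast
    ring
  have hS : ∑ k ∈ Finset.range (N + 1),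
        fc (fun θ => f θ * g θ) k * Complex.exp (Complex.I * k * t)
      = ∑ j ∈ Finset.range (N + 1), fc f j * Complex.exp (Complex.I * j * t)
          * ∑ m ∈ Finset.range (N + 1 - j), fc g m * Complex.exp (Complex.I * m * t) := by
    rw [Finset.sum_congr rfl (fun k hk => ?_), stepC N (fun j => fc f j) (fun m => fc g m)
      (fun k => Complex.exp (Complex.I * k * t)) hE]
    rw [hconv k]
    congr 1
    apply Finset.sum_congr rfl
    intro j hj
    simp only [Finset.mem_range] at hj
    congr 2
    omega
  have hSfN : ∀ x : ℝ, True := fun _ => trivial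
  have hdiff : f t * g t - ∑ k ∈ Finset.range (N + 1),
        fc (fun θ => f θ * g θ) k * Complex.exp (Complex.I * k * t)
      = (f t - ∑ j ∈ Finset.range (N + 1), fc f j * Complex.exp (Complex.I * j * t)) * g t
        + ∑ j ∈ Finset.range (N + 1), (fc f j * Complex.exp (Complex.I * j * t))
          * (g t - ∑ m ∈ Finset.range (N + 1 - j), fc g m * Complex.exp (Complex.I * m * t)) := by
    rw [hS]
    simp_rw [mul_sub]
    rw [Finset.sum_sub_distrib, ← Finset.sum_mul]
    ring
  rw [dist_eq_norm, hdiff]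
  have hterm2 : ∀ j ∈ Finset.range (N + 1),
      ‖(fc f j * Complex.exp (Complex.I * j * t))
        * (g t - ∑ m ∈ Finset.range (N + 1 - j), fc g m * Complex.exp (Complex.I * m * t))‖
      = a j * ‖g t - ∑ m ∈ Finset.range (N + 1 - j),
          fc g m * Complex.exp (Complex.I * m * t)‖ := by
    intro j _
    rw [norm_mul, ha_norm]
  have hbound1 : ∀ j ∈ Finset.range (N - N0 + 1),
      a j * ‖g t - ∑ m ∈ Finset.range (N + 1 - j), fc g m * Complex.exp (Complex.I * m * t)‖
        ≤ a j * ε' := by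
    intro j hj
    simp only [Finset.mem_range] at hj
    apply mul_le_mul_of_nonneg_left _ (ha_nonneg j)
    have hj' : j ≤ N - N0 := by omega
    have hNj : N - j ≥ N0 := by omega
    have h := hN0 (N - j) hNj t
    rw [show N - j + 1 = N + 1 - j by omega] at h
    rw [← dist_eq_norm]
    exact h.le
  have hbound2 : ∀ j ∈ Finset.Ico (N - N0 + 1) (N + 1),
      a j * ‖g t - ∑ m ∈ Finset.range (N + 1 - j), fc g m * Complex.exp (Complex.I * m * t)‖
        ≤ a j * C := by
    intro j _
    exact mul_le_mul_of_nonneg_left (hCbound _ t) (ha_nonneg j)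
  calc ‖(f t - ∑ j ∈ Finset.range (N + 1), fc f j * Complex.exp (Complex.I * j * t)) * g t
        + ∑ j ∈ Finset.range (N + 1), (fc f j * Complex.exp (Complex.I * j * t))
          * (g t - ∑ m ∈ Finset.range (N + 1 - j), fc g m * Complex.exp (Complex.I * m * t))‖
      ≤ ‖(f t - ∑ j ∈ Finset.range (N + 1), fc f j * Complex.exp (Complex.I * j * t)) * g t‖
        + ‖∑ j ∈ Finset.range (N + 1), (fc f j * Complex.exp (Complex.I * j * t))
          * (g t - ∑ m ∈ Finset.range (N + 1 - j),
            fc g m * Complex.exp (Complex.I * m * t))‖ := norm_add_le _ _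
    _ ≤ ε' * Cg + (A * ε' + ε' * C) := by
        apply add_le_add
        · rw [norm_mul]
          apply mul_le_mul _ (hCg t) (norm_nonneg _) hε'_pos.le
          exact le_of_lt (lt_of_le_of_lt (hfr (N + 1) t) (hK (N + 1) (by omega)))
        · calc ‖∑ j ∈ Finset.range (N + 1), (fc f j * Complex.exp (Complex.I * j * t))
              * (g t - ∑ m ∈ Finset.range (N + 1 - j),
                fc g m * Complex.exp (Complex.I * m * t))‖
              ≤ ∑ j ∈ Finset.range (N + 1), a j * ‖g t - ∑ m ∈ Finset.range (N + 1 - j),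
                  fc g m * Complex.exp (Complex.I * m * t)‖ := by
                refine le_trans (norm_sum_le _ _) ?_
                apply le_of_eq
                exact Finset.sum_congr rfl hterm2
            _ = (∑ j ∈ Finset.range (N - N0 + 1), a j * ‖g t - ∑ m ∈ Finset.range (N + 1 - j),
                  fc g m * Complex.exp (Complex.I * m * t)‖)
                + ∑ j ∈ Finset.Ico (N - N0 + 1) (N + 1), a j * ‖g t
                  - ∑ m ∈ Finset.range (N + 1 - j),
                    fc g m * Complex.exp (Complex.I * m * t)‖ := by
                rw [Finset.sum_range_add_sum_Ico _ (by omega : N - N0 + 1 ≤ N + 1)]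
            _ ≤ (∑ j ∈ Finset.range (N - N0 + 1), a j * ε')
                + ∑ j ∈ Finset.Ico (N - N0 + 1) (N + 1), a j * C := by
                exact add_le_add (Finset.sum_le_sum hbound1) (Finset.sum_le_sum hbound2)
            _ ≤ A * ε' + ε' * C := by
                apply add_le_add
                · rw [← Finset.sum_mul]
                  exact mul_le_mul_of_nonneg_right (hA_sum _) hε'_pos.le
                · rw [← Finset.sum_mul]
                  apply mul_le_mul_of_nonneg_right _ hC_nonneg
                  calc ∑ j ∈ Finset.Ico (N - N0 + 1) (N + 1), a j ≤ r (N - N0 + 1) :=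
                        hIco _ _
                    _ ≤ ε' := (hK (N - N0 + 1) (by omega)).le
    _ ≤ ε' * D := by
        rw [hD_def]
        nlinarith [hε'_pos.le, hCg_nonneg, hC_nonneg, hA_nonneg]
    _ < ε := by
        have hDne : D ≠ 0 := hD_pos.ne'
        have h2 : ε' * D = ε / 2 := by
          rw [hε'_def]
          field_simp
        clear_value D ε'
        linarith
end
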